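/- Let m ≥ 0 and k ≥ 0 be integers, 1/2 ≤ α < 1, and x ≥ 3. Then ∫_2^x t^{α−1}·((k+2)log x − log t)^{−(2m+2)} dt = x^{α}/(α((k+1)log x)^{2m+2}) − 2^{α}/(α((k+2)log x − log 2)^{2m+2}) + E, where |E| ≤ C(m)·x^{α}/((k+1)log x)^{2m+3} for a constant C(m) depending only on m. -/

import Mathlib

open Real MeasureTheory

theorem integral_rpow_shifted_log_asymp (m : ℕ) :
    ∃ C : ℝ, 0 < C ∧
      ∀ (k : ℕ) (α x : ℝ), 1 / 2 ≤ α → α < 1 → 3 ≤ x →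
        ∃ E : ℝ,
          (∫ t in (2 : ℝ)..x,
              t ^ (α - 1) / (((k : ℝ) + 2) * Real.log x - Real.log t) ^ (2 * m + 2)) =
            x ^ α / (α * (((k : ℝ) + 1) * Real.log x) ^ (2 * m + 2)) -
              (2 : ℝ) ^ α / (α * (((k : ℝ) + 2) * Real.log x - Real.log 2) ^ (2 * m + 2)) + E ∧
          |E| ≤ C * x ^ α / (((k : ℝ) + 1) * Real.log x) ^ (2 * m + 3) := by
  refine ⟨8 * m + 9, by positivity, ?_⟩
  intro k α x hα hα1 hx
  have hα0 : (0:ℝ) < α := by linarith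
  have h2x : (2:ℝ) ≤ x := by linarith
  have hx0 : (0:ℝ) < x := by linarith
  have hlx : 1 < Real.log x := by
    rw [Real.lt_log_iff_exp_lt hx0]
    calc Real.exp 1 < 2.7182818286 := Real.exp_one_lt_d9
      _ ≤ x := by linarith
  have hD0 : 0 < ((k:ℝ) + 1) * Real.log x := by positivity
  -- pointwise facts on [2, x]
  have hLD : ∀ t ∈ Set.Icc (2:ℝ) x,
      ((k:ℝ) + 1) * Real.log x ≤ ((k:ℝ) + 2) * Real.log x - Real.log t := by
    intro t ht
    have h1 : Real.log t ≤ Real.log x := Real.log_le_log (by linarith [ht.1]) ht.2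
    nlinarith [Nat.cast_nonneg (α := ℝ) k]
  have hLpos : ∀ t ∈ Set.Icc (2:ℝ) x,
      0 < ((k:ℝ) + 2) * Real.log x - Real.log t := fun t ht => lt_of_lt_of_le hD0 (hLD t ht)
  -- the antiderivative
  set F : ℝ → ℝ := fun t => t ^ α / (α * (((k:ℝ) + 2) * Real.log x - Real.log t) ^ (2 * m + 2))
    with hF
  have key : ∀ t ∈ Set.uIcc (2:ℝ) x, HasDerivAt F
      (t ^ (α - 1) / (((k:ℝ) + 2) * Real.log x - Real.log t) ^ (2 * m + 2)
        + (2 * (m:ℝ) + 2) / α *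
          (t ^ (α - 1) / (((k:ℝ) + 2) * Real.log x - Real.log t) ^ (2 * m + 3))) t := by
    intro t ht
    rw [Set.uIcc_of_le h2x] at ht
    have ht0 : (0:ℝ) < t := by linarith [ht.1]
    have hL0 : 0 < ((k:ℝ) + 2) * Real.log x - Real.log t := hLpos t ht
    have h1 : HasDerivAt (fun s : ℝ => s ^ α) (α * t ^ (α - 1)) t :=
      Real.hasDerivAt_rpow_const (Or.inl ht0.ne')
    have h2 : HasDerivAt (fun s : ℝ => ((k:ℝ) + 2) * Real.log x - Real.log s) (-t⁻¹) t := by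
      exact (Real.hasDerivAt_log ht0.ne').const_sub (((k:ℝ) + 2) * Real.log x)
    have h3 : HasDerivAt (fun s : ℝ => α * (((k:ℝ) + 2) * Real.log x - Real.log s) ^ (2 * m + 2))
        (α * ((2 * (m:ℝ) + 2) * (((k:ℝ) + 2) * Real.log x - Real.log t) ^ (2 * m + 1) * (-t⁻¹)))
        t := by
      have := (h2.pow (2 * m + 2)).const_mul α
      refine this.congr_deriv ?_
      push_cast
      ring
    have h4 := h1.div h3 (by positivity)
    refine h4.congr_deriv ?_
    have hrt : t ^ (α - 1) = t ^ α / t := by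
      rw [Real.rpow_sub ht0, Real.rpow_one]
    rw [hrt]
    field_simp
    ring
  have hcontL : ContinuousOn (fun t : ℝ => ((k:ℝ) + 2) * Real.log x - Real.log t)
      (Set.Icc (2:ℝ) x) := by
    refine continuousOn_const.sub (Real.continuousOn_log.mono ?_)
    intro t ht
    simp only [Set.mem_compl_iff, Set.mem_singleton_iff]
    have := ht.1
    intro h; rw [h] at this; norm_num at this
  have hcontr : ContinuousOn (fun t : ℝ => t ^ (α - 1)) (Set.Icc (2:ℝ) x) := by
    intro t ht
    exact (Real.continuousAt_rpow_const t _ (Or.inl (by linarith [ht.1]))).continuousWithinAt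
  have hInt1 : IntervalIntegrable
      (fun t : ℝ => t ^ (α - 1) / (((k:ℝ) + 2) * Real.log x - Real.log t) ^ (2 * m + 2))
      volume 2 x := by
    rw [intervalIntegrable_iff_integrableOn_Icc_of_le h2x]
    refine ((hcontr.div (hcontL.pow _) ?_).integrableOn_compact isCompact_Icc)
    intro t ht
    exact pow_ne_zero _ (hLpos t ht).ne'
  have hInt2 : IntervalIntegrable
      (fun t : ℝ => t ^ (α - 1) / (((k:ℝ) + 2) * Real.log x - Real.log t) ^ (2 * m + 3))
      volume 2 x := by
    rw [intervalIntegrable_iff_integrableOn_Icc_of_le h2x]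
    refine ((hcontr.div (hcontL.pow _) ?_).integrableOn_compact isCompact_Icc)
    intro t ht
    exact pow_ne_zero _ (hLpos t ht).ne'
  have hftc : (∫ t in (2:ℝ)..x,
      (t ^ (α - 1) / (((k:ℝ) + 2) * Real.log x - Real.log t) ^ (2 * m + 2)
        + (2 * (m:ℝ) + 2) / α *
          (t ^ (α - 1) / (((k:ℝ) + 2) * Real.log x - Real.log t) ^ (2 * m + 3)))) = F x - F 2 :=
    intervalIntegral.integral_eq_sub_of_hasDerivAt key
      (hInt1.add ((hInt2.const_mul _)))
  rw [intervalIntegral.integral_add hInt1 (hInt2.const_mul _),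
    intervalIntegral.integral_const_mul] at hftc
  set J : ℝ := ∫ t in (2:ℝ)..x,
      t ^ (α - 1) / (((k:ℝ) + 2) * Real.log x - Real.log t) ^ (2 * m + 3) with hJ
  refine ⟨-((2 * (m:ℝ) + 2) / α * J), ?_, ?_⟩
  · have hFx : F x = x ^ α / (α * (((k:ℝ) + 1) * Real.log x) ^ (2 * m + 2)) := by
      have h : ((k:ℝ) + 2) * Real.log x - Real.log x = ((k:ℝ) + 1) * Real.log x := by ring
      simp only [hF]
      rw [h]
    have hF2 : F 2 = (2:ℝ) ^ α / (α * (((k:ℝ) + 2) * Real.log x - Real.log 2) ^ (2 * m + 2)) :=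
      rfl
    rw [← hFx, ← hF2]
    linarith [hftc]
  · -- the error bound
    have hJ0 : 0 ≤ J := by
      rw [hJ]
      apply intervalIntegral.integral_nonneg h2x
      intro t ht
      have := hLpos t ht
      have ht0 : (0:ℝ) < t := by linarith [ht.1]
      positivity
    have hc0 : 0 ≤ (2 * (m:ℝ) + 2) / α := by positivity
    rw [abs_neg, abs_of_nonneg (mul_nonneg hc0 hJ0)]
    have hIntR : IntervalIntegrable
        (fun t : ℝ => t ^ (α - 1) / (((k:ℝ) + 1) * Real.log x) ^ (2 * m + 3)) volume 2 x := by
      rw [intervalIntegrable_iff_integrableOn_Icc_of_le h2x]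
      exact (hcontr.div_const _).integrableOn_compact isCompact_Icc
    have hJle : J ≤ (x ^ α - 2 ^ α) / α / (((k:ℝ) + 1) * Real.log x) ^ (2 * m + 3) := by
      have step1 : J ≤ ∫ t in (2:ℝ)..x,
          t ^ (α - 1) / (((k:ℝ) + 1) * Real.log x) ^ (2 * m + 3) := by
        rw [hJ]
        apply intervalIntegral.integral_mono_on h2x hInt2 hIntR
        intro t ht
        have ht0 : (0:ℝ) < t := by linarith [ht.1]
        exact div_le_div_of_nonneg_left (Real.rpow_nonneg ht0.le _) (by positivity)
          (pow_le_pow_left₀ hD0.le (hLD t ht) _)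
      have step2 : (∫ t in (2:ℝ)..x,
          t ^ (α - 1) / (((k:ℝ) + 1) * Real.log x) ^ (2 * m + 3))
          = (x ^ α - 2 ^ α) / α / (((k:ℝ) + 1) * Real.log x) ^ (2 * m + 3) := by
        rw [intervalIntegral.integral_div, integral_rpow]
        · norm_num
        · refine Or.inr ⟨?_, ?_⟩
          · intro h
            have : α = 0 := by linarith
            exact hα0.ne' this
          · rw [Set.uIcc_of_le h2x]
            intro h
            have := h.1
            norm_num at this
      linarith
    have h2α : (0:ℝ) < (2:ℝ) ^ α := by positivity
    have hxα0 : (0:ℝ) < x ^ α := by positivity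
    have hxα : (2:ℝ) ^ α ≤ x ^ α := Real.rpow_le_rpow (by norm_num) h2x hα0.le
    calc (2 * (m:ℝ) + 2) / α * J
        ≤ (2 * (m:ℝ) + 2) / α * ((x ^ α - 2 ^ α) / α / (((k:ℝ) + 1) * Real.log x) ^ (2 * m + 3)) := by
          gcongr
      _ = (2 * (m:ℝ) + 2) / α * ((x ^ α - 2 ^ α) / α) / (((k:ℝ) + 1) * Real.log x) ^ (2 * m + 3) := by
          ring
      _ ≤ (8 * (m:ℝ) + 9) * x ^ α / (((k:ℝ) + 1) * Real.log x) ^ (2 * m + 3) := by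
          have hnum : (2 * (m:ℝ) + 2) / α * ((x ^ α - 2 ^ α) / α) ≤ (8 * (m:ℝ) + 9) * x ^ α := by
            rw [div_mul_div_comm, div_le_iff₀ (by positivity)]
            nlinarith [mul_le_mul_of_nonneg_left (show (1:ℝ)/4 ≤ α * α by nlinarith)
              (show (0:ℝ) ≤ (8 * (m:ℝ) + 9) * x ^ α by positivity),
            mul_nonneg (Nat.cast_nonneg (α := ℝ) m) h2α.le,
            mul_nonneg (Nat.cast_nonneg (α := ℝ) m) hxα0.le]
          exact (div_le_div_iff_of_pos_right (by positivity)).mpr hnum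
      _ = (8 * ↑m + 9) * x ^ α / (((k:ℝ) + 1) * Real.log x) ^ (2 * m + 3) := by norm_num
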